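/- arXiv:1008.3237 — 2 statements merged into one kernel-verified Lean document; each statement's English description precedes it below -/
import Mathlib

section
/- Every mcs-cone C ⊂ P(B(K),B(H)) contains all conjugation maps Ad_V with rk V = 1: for every nonzero Φ ∈ C and every rank-one V : K → H, the map Ad_V belongs to C. -/
open Matrix BigOperators ComplexOrder
open scoped Kronecker ComplexConjugate

/-- Square complex matrices of size `d`, modeling `B(ℂ^d)`. -/
abbrev MatC (d : ℕ) := Matrix (Fin d) (Fin d) ℂ

/-- Hilbert–Schmidt (trace) inner product `⟨A, B⟩ = Tr (A B*)`. -/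
noncomputable def hsInner {ι : Type*} [Fintype ι] (A B : Matrix ι ι ℂ) : ℂ :=
  (A * Bᴴ).trace

/-- Inner product of linear maps: `⟨Φ, Ψ⟩ = Σ_{k,l} ⟨Φ f_{kl}, Ψ f_{kl}⟩`. -/
noncomputable def mapInner {a b : ℕ} (Φ Ψ : MatC a →ₗ[ℂ] MatC b) : ℂ :=
  ∑ k : Fin a, ∑ l : Fin a,
    hsInner (Φ (Matrix.single k l 1)) (Ψ (Matrix.single k l 1))

/-- The adjoint map `Φ*` w.r.t. the trace inner products, satisfying
`⟨A, Φ B⟩ = ⟨Φ* A, B⟩`. -/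
noncomputable def adjointMap {a b : ℕ} (Φ : MatC a →ₗ[ℂ] MatC b) : MatC b →ₗ[ℂ] MatC a where
  toFun A := Matrix.of fun k l => hsInner A (Φ (Matrix.single k l 1))
  map_add' := by
    intro A B; ext k l
    simp [hsInner, Matrix.add_mul]
  map_smul' := by
    intro c A; ext k l
    simp [hsInner, Matrix.smul_mul]

/-- The conjugation map `Ad_V : ρ ↦ V ρ V*`. -/
noncomputable def adMap {a b : ℕ} (V : Matrix (Fin b) (Fin a) ℂ) : MatC a →ₗ[ℂ] MatC b where
  toFun ρ := V * ρ * Vᴴ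
  map_add' := by intro ρ σ; simp [Matrix.mul_add, Matrix.add_mul]
  map_smul' := by intro c ρ; simp [Matrix.mul_smul, Matrix.smul_mul]

/-- The map `Φ ⊗ id_k` acting on `Matrix (Fin a × Fin k)`. -/
noncomputable def tensId {a b : ℕ} (Φ : MatC a →ₗ[ℂ] MatC b) (k : ℕ)
    (X : Matrix (Fin a × Fin k) (Fin a × Fin k) ℂ) :
    Matrix (Fin b × Fin k) (Fin b × Fin k) ℂ :=
  Matrix.of fun p q => Φ (Matrix.of fun i j => X (i, p.2) (j, q.2)) p.1 q.1

/-- `Φ` is `k`-positive if `Φ ⊗ id_k` preserves positive semidefiniteness. -/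
def IsKPositive {a b : ℕ} (Φ : MatC a →ₗ[ℂ] MatC b) (k : ℕ) : Prop :=
  ∀ X : Matrix (Fin a × Fin k) (Fin a × Fin k) ℂ, X.PosSemidef → (tensId Φ k X).PosSemidef

/-- `Φ` is completely positive if it is `k`-positive for all `k`. -/
def IsCompletelyPositive {a b : ℕ} (Φ : MatC a →ₗ[ℂ] MatC b) : Prop :=
  ∀ k : ℕ, IsKPositive Φ k

/-- Positive map: maps PSD matrices to PSD matrices. -/
def IsPosMap {a b : ℕ} (Φ : MatC a →ₗ[ℂ] MatC b) : Prop :=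
  ∀ X : MatC a, X.PosSemidef → (Φ X).PosSemidef

/-- Hermiticity-preserving map. -/
def HermPreserving {a b : ℕ} (Φ : MatC a →ₗ[ℂ] MatC b) : Prop :=
  ∀ X, Φ Xᴴ = (Φ X)ᴴ

/-- Choi–Jamiołkowski matrix `J(Φ) = Σ_{k,l} f_{kl} ⊗ Φ(f_{kl})`. -/
noncomputable def choi {a b : ℕ} (Φ : MatC a →ₗ[ℂ] MatC b) :
    Matrix (Fin a × Fin b) (Fin a × Fin b) ℂ :=
  ∑ k : Fin a, ∑ l : Fin a,
    (Matrix.single k l (1 : ℂ)) ⊗ₖ (Φ (Matrix.single k l 1))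

noncomputable instance instTopMaps {a b : ℕ} : TopologicalSpace (MatC a →ₗ[ℂ] MatC b) :=
  TopologicalSpace.induced (fun Φ => (Φ : MatC a → MatC b)) inferInstance

/-- A cone with a mapping cone symmetry (mcs-cone): a nonzero closed convex cone of
positive maps, stable under two-sided composition with completely positive maps. -/
def IsMcsCone {a b : ℕ} (C : Set (MatC a →ₗ[ℂ] MatC b)) : Prop :=
  (∃ Φ ∈ C, Φ ≠ 0) ∧ IsClosed C ∧
  (∀ Φ ∈ C, ∀ Ψ ∈ C, Φ + Ψ ∈ C) ∧
  (∀ Φ ∈ C, ∀ c : ℝ, 0 ≤ c → (c : ℂ) • Φ ∈ C) ∧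
  (∀ Φ ∈ C, IsPosMap Φ) ∧
  (∀ Φ ∈ C, ∀ Υ : MatC b →ₗ[ℂ] MatC b, IsCompletelyPositive Υ →
    ∀ Ω : MatC a →ₗ[ℂ] MatC a, IsCompletelyPositive Ω → Υ ∘ₗ Φ ∘ₗ Ω ∈ C)

/-- Dual cone inside Hermiticity-preserving maps. -/
def dualCone {a b : ℕ} (C : Set (MatC a →ₗ[ℂ] MatC b)) : Set (MatC a →ₗ[ℂ] MatC b) :=
  {Ψ | HermPreserving Ψ ∧ ∀ Φ ∈ C, 0 ≤ mapInner Ψ Φ}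



lemma adMap_kron {a b k : ℕ} (V : Matrix (Fin b) (Fin a) ℂ)
    (X : Matrix (Fin a × Fin k) (Fin a × Fin k) ℂ) :
    tensId (adMap V) k X = (V ⊗ₖ (1 : Matrix (Fin k) (Fin k) ℂ)) * X * (V ⊗ₖ (1 : Matrix (Fin k) (Fin k) ℂ))ᴴ := by
  ext ⟨p1, p2⟩ ⟨q1, q2⟩
  simp [tensId, adMap, Matrix.mul_apply, Fintype.sum_prod_type, Matrix.one_apply,
    Finset.sum_mul, Finset.mul_sum, apply_ite, mul_comm, mul_left_comm]

lemma adMap_cp {a b : ℕ} (V : Matrix (Fin b) (Fin a) ℂ) : IsCompletelyPositive (adMap V) := by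
  intro k X hX
  rw [adMap_kron]
  exact hX.mul_mul_conjTranspose_same _

lemma adMap_vecMulVec {a b : ℕ} (x : Fin b → ℂ) (z : Fin a → ℂ) (ρ : MatC a) :
    adMap (Matrix.vecMulVec x z) ρ
      = (z ⬝ᵥ ρ *ᵥ star z) • Matrix.vecMulVec x (star x) := by
  ext p q
  simp [adMap, Matrix.mul_apply, Matrix.vecMulVec_apply, dotProduct, Matrix.mulVec,
    Finset.sum_mul, Finset.mul_sum]
  rw [Finset.sum_comm]
  refine Finset.sum_congr rfl fun i _ => Finset.sum_congr rfl fun j _ => by ring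
lemma psd_vecMulVec {d : ℕ} (v : Fin d → ℂ) : (Matrix.vecMulVec v (star v)).PosSemidef := by
  refine Matrix.PosSemidef.of_dotProduct_mulVec_nonneg ?_ ?_
  · ext i j
    simp [Matrix.conjTranspose_apply, Matrix.vecMulVec_apply, mul_comm]
  · intro w
    have h : star w ⬝ᵥ (Matrix.vecMulVec v (star v)) *ᵥ w
        = (star w ⬝ᵥ v) * star (star w ⬝ᵥ v) := by
      simp [dotProduct, Matrix.mulVec, Matrix.vecMulVec_apply, Finset.sum_mul,
        Finset.mul_sum, star_sum]
      rw [Finset.sum_comm]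
      refine Finset.sum_congr rfl fun i _ => Finset.sum_congr rfl fun j _ => by ring
    rw [h]
    exact mul_star_self_nonneg _
lemma polar {d : ℕ} (x y : Fin d → ℂ) :
    (4 : ℂ) • Matrix.vecMulVec x (star y) =
      Matrix.vecMulVec (x + y) (star (x + y))
      + Complex.I • Matrix.vecMulVec (x + Complex.I • y) (star (x + Complex.I • y))
      - Matrix.vecMulVec (x - y) (star (x - y))
      - Complex.I • Matrix.vecMulVec (x - Complex.I • y) (star (x - Complex.I • y)) := by
  ext i j
  simp only [Matrix.smul_apply, Matrix.sub_apply, Matrix.add_apply, Matrix.vecMulVec_apply,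
    Pi.star_apply, Pi.add_apply, Pi.sub_apply, Pi.smul_apply, smul_eq_mul, star_add, star_sub,
    star_mul', Complex.star_def, Complex.conj_I, _root_.map_mul]
  ring_nf
  linear_combination (2 * x i * (starRingEnd ℂ) (y j) - 2 * y i * (starRingEnd ℂ) (x j)) * Complex.I_sq

lemma single_dot {d : ℕ} (A : MatC d) (i : Fin d) :
    Pi.single i 1 ⬝ᵥ A *ᵥ star (Pi.single i (1:ℂ)) = A i i := by
  simp [dotProduct, Matrix.mulVec, Pi.single_apply, apply_ite, Finset.mul_sum]

lemma psd_diag {d : ℕ} (A : MatC d) (i : Fin d) :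
    A i i = star (Pi.single i (1:ℂ)) ⬝ᵥ A *ᵥ Pi.single i 1 := by
  simp [dotProduct, Matrix.mulVec, Pi.single_apply, apply_ite, Finset.mul_sum]

lemma psd_exists_diag_ne {d : ℕ} {A : MatC d} (hA : A.PosSemidef) (h : A ≠ 0) :
    ∃ i, A i i ≠ 0 := by
  by_contra hc
  push_neg at hc
  apply h
  ext p q
  have hq : A *ᵥ Pi.single q 1 = 0 := by
    rw [← hA.dotProduct_mulVec_zero_iff]
    rw [← psd_diag]
    exact hc q
  have := congrFun hq p
  simpa [Matrix.mulVec_single] using this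

lemma rank_one_decomp {a b : ℕ} (V : Matrix (Fin b) (Fin a) ℂ) (hV : V.rank = 1) :
    ∃ (x : Fin b → ℂ) (c : Fin a → ℂ), V = Matrix.vecMulVec x c := by
  rw [Matrix.rank, finrank_eq_one_iff'] at hV
  obtain ⟨⟨x, hxmem⟩, _, hspan⟩ := hV
  choose c hc using fun j =>
    hspan ⟨V.mulVecLin (Pi.single j 1), LinearMap.mem_range_self _ _⟩
  refine ⟨x, c, ?_⟩
  ext i j
  have h := congrFun (congrArg Subtype.val (hc j)) i
  simp only [Submodule.coe_smul, Pi.smul_apply, smul_eq_mul, Matrix.mulVecLin_apply,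
    Matrix.mulVec_single, mul_one, MulOpposite.op_one, one_smul, Matrix.col_apply] at h
  rw [Matrix.vecMulVec_apply, mul_comm, h]
lemma std_eq_vmv {a : ℕ} (k l : Fin a) :
    Matrix.single k l (1:ℂ) = Matrix.vecMulVec (Pi.single k 1) (star (Pi.single l 1)) := by
  ext i j
  simp only [Matrix.single, Matrix.vecMulVec_apply, Pi.single_apply, Matrix.of_apply,
    @eq_comm _ k, @eq_comm _ l]
  split_ifs <;> simp_all

lemma exists_vec {a b : ℕ} (Φ : MatC a →ₗ[ℂ] MatC b) (hΦ : Φ ≠ 0) :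
    ∃ v : Fin a → ℂ, Φ (Matrix.vecMulVec v (star v)) ≠ 0 := by
  by_contra hc
  push_neg at hc
  apply hΦ
  have h2 : ∀ x y : Fin a → ℂ, Φ (Matrix.vecMulVec x (star y)) = 0 := by
    intro x y
    have h4 := congrArg Φ (polar x y)
    simp only [_root_.map_smul, map_add, map_sub, hc, smul_zero, add_zero, sub_zero, zero_add, sub_self] at h4
    have h5 : Φ (Matrix.vecMulVec x (star y))
        = (4:ℂ)⁻¹ • ((4:ℂ) • Φ (Matrix.vecMulVec x (star y))) := by
      rw [smul_smul]; norm_num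
    rw [h5, h4, smul_zero]
  have h3 : ∀ (k l : Fin a), Φ (Matrix.single k l (1:ℂ)) = 0 := by
    intro k l; rw [std_eq_vmv]; exact h2 _ _
  apply LinearMap.ext
  intro X
  rw [LinearMap.zero_apply]
  conv_lhs => rw [Matrix.matrix_eq_sum_single X]
  simp only [map_sum]
  refine Finset.sum_eq_zero fun k _ => Finset.sum_eq_zero fun l _ => ?_
  have hstd : Matrix.single k l (X k l) = X k l • Matrix.single k l 1 := by
    rw [Matrix.smul_single, smul_eq_mul, mul_one]
  rw [hstd, LinearMap.map_smul, h3, smul_zero]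

/-- Every mcs-cone contains all conjugation maps `Ad_V` with `rk V = 1`. -/
theorem stmt9 {m n : ℕ} (C : Set (MatC m →ₗ[ℂ] MatC n)) (hC : IsMcsCone C)
    (Φ : MatC m →ₗ[ℂ] MatC n) (hΦC : Φ ∈ C) (hΦ : Φ ≠ 0) :
    ∀ V : Matrix (Fin n) (Fin m) ℂ, V.rank = 1 → adMap V ∈ C := by
  intro V hV
  obtain ⟨hne, hclosed, hadd, hsmul, hpos, hcomp⟩ := hC
  obtain ⟨v, hv⟩ := exists_vec Φ hΦ
  have hPSD : (Φ (Matrix.vecMulVec v (star v))).PosSemidef := hpos Φ hΦC _ (psd_vecMulVec v)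
  obtain ⟨i, hi⟩ := psd_exists_diag_ne hPSD hv
  set A := Φ (Matrix.vecMulVec v (star v)) with hA
  have ht : (0:ℂ) ≤ A i i := by rw [psd_diag A i]; exact hPSD.dotProduct_mulVec_nonneg _
  rw [Complex.le_def] at ht
  have him : (A i i).im = 0 := by simpa using ht.2.symm
  set r : ℝ := (A i i).re with hr
  have hAr : A i i = (r : ℂ) := by apply Complex.ext <;> simp [him, hr]
  have hr0 : 0 ≤ r := by simpa [hr] using ht.1
  have hrne : r ≠ 0 := by
    intro h0
    exact hi (by rw [hAr, h0, Complex.ofReal_zero])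
  obtain ⟨x, c, rfl⟩ := rank_one_decomp V hV
  have hmem := hcomp Φ hΦC (adMap (Matrix.vecMulVec x (Pi.single i 1))) (adMap_cp _)
      (adMap (Matrix.vecMulVec v c)) (adMap_cp _)
  have heq : adMap (Matrix.vecMulVec x (Pi.single i 1)) ∘ₗ Φ ∘ₗ adMap (Matrix.vecMulVec v c)
      = (A i i) • adMap (Matrix.vecMulVec x c) := by
    apply LinearMap.ext
    intro ρ
    simp only [LinearMap.comp_apply, LinearMap.smul_apply]
    rw [adMap_vecMulVec v c ρ, LinearMap.map_smul, ← hA, adMap_vecMulVec, adMap_vecMulVec,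
      single_dot, Matrix.smul_apply, smul_smul, smul_eq_mul, mul_comm]
  rw [heq] at hmem
  have hmem2 := hsmul _ hmem (1/r) (by positivity)
  have hfin : ((1/r : ℝ) : ℂ) • ((A i i) • adMap (Matrix.vecMulVec x c))
      = adMap (Matrix.vecMulVec x c) := by
    rw [hAr, smul_smul, ← Complex.ofReal_mul, one_div, inv_mul_cancel₀ hrne,
      Complex.ofReal_one, one_smul]
  rwa [hfin] at hmem2
end

section
/- A Hermiticity-preserving map Φ : B(K) → B(H) is k-positive if and only if Ad_{V*}∘Φ is completely positive on B(K) for all V : K → H with rank V ≤ k, if and only if Φ∘Ad_{V*} is completely positive on B(H) for all such V. -/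
open Matrix BigOperators ComplexOrder
open scoped Kronecker ComplexConjugate

lemma choi_apply {a b : ℕ} (Φ : MatC a →ₗ[ℂ] MatC b) (p q : Fin a × Fin b) :
    choi Φ p q = Φ (Matrix.single p.1 q.1 1) p.2 q.2 := by
  obtain ⟨c, i⟩ := p; obtain ⟨d, j⟩ := q
  simp [choi, Matrix.sum_apply, Matrix.kroneckerMap_apply, Matrix.single,
    ite_and, Finset.sum_ite_eq, Finset.sum_ite_eq']

lemma map_matrix_apply {a b : ℕ} (Φ : MatC a →ₗ[ℂ] MatC b) (M : MatC a) (i j : Fin b) :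
    Φ M i j = ∑ c : Fin a, ∑ d : Fin a, M c d * Φ (Matrix.single c d 1) i j := by
  conv_lhs => rw [Matrix.matrix_eq_sum_single M]
  rw [map_sum]
  simp only [Matrix.sum_apply]
  refine Finset.sum_congr rfl fun c _ => ?_
  rw [map_sum]
  simp only [Matrix.sum_apply]
  refine Finset.sum_congr rfl fun d _ => ?_
  have : Matrix.single c d (M c d) = M c d • Matrix.single c d (1:ℂ) := by
    ext i' j'; simp [Matrix.single]
  rw [this, _root_.map_smul]; simp

/-- reshaped "vec" appearing in the key identity -/
noncomputable def gVec {a b l : ℕ} (z : Fin a × Fin l → ℂ) (y : Fin b × Fin l → ℂ) :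
    Fin a × Fin b → ℂ :=
  fun p => ∑ t : Fin l, star (z (p.1, t)) * y (p.2, t)

lemma tensId_outer_apply {a b l : ℕ} (Φ : MatC a →ₗ[ℂ] MatC b)
    (z : Fin a × Fin l → ℂ) (p q : Fin b × Fin l) :
    tensId Φ l (Matrix.of fun p q => z p * star (z q)) p q
      = ∑ c : Fin a, ∑ d : Fin a,
          z (c, p.2) * star (z (d, q.2)) * Φ (Matrix.single c d 1) p.1 q.1 := by
  simp only [tensId, Matrix.of_apply]
  rw [map_matrix_apply]
  simp

lemma key_identity {a b l : ℕ} (Φ : MatC a →ₗ[ℂ] MatC b)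
    (z : Fin a × Fin l → ℂ) (y : Fin b × Fin l → ℂ) :
    star y ⬝ᵥ (tensId Φ l (Matrix.of fun p q => z p * star (z q))) *ᵥ y
      = star (gVec z y) ⬝ᵥ (choi Φ) *ᵥ (gVec z y) := by
  simp only [dotProduct, Matrix.mulVec, tensId_outer_apply, choi_apply, gVec,
    Pi.star_apply]
  simp only [Finset.mul_sum, Finset.sum_mul, star_sum, StarMul.star_mul, star_star]
  simp only [← Finset.sum_product', Finset.univ_product_univ]
  exact Fintype.sum_equiv
    ⟨fun x => ((x.2.2.1, x.1.1), (x.2.2.2, x.2.1.1), (x.2.1.2, x.1.2)),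
     fun x => ((x.1.2, x.2.2.2), (x.2.1.2, x.2.2.1), (x.1.1, x.2.1.1)),
     fun x => rfl, fun x => rfl⟩ _ _ (fun x => by simp only [Equiv.coe_fn_mk]; ring)

/-- rank-one / outer product matrix -/
noncomputable def outer {ι : Type*} (z : ι → ℂ) : Matrix ι ι ℂ :=
  Matrix.of fun p q => z p * star (z q)

lemma outer_posSemidef {ι : Type*} [Fintype ι] (z : ι → ℂ) : (outer z).PosSemidef := by
  refine Matrix.PosSemidef.of_dotProduct_mulVec_nonneg ?_ ?_
  · ext p q
    simp [outer, Matrix.conjTranspose_apply, mul_comm]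
  · intro x
    have h1 : star x ⬝ᵥ (outer z) *ᵥ x
        = star (∑ q, star (z q) * x q) * (∑ q, star (z q) * x q) := by
      simp only [dotProduct, Matrix.mulVec, outer, Matrix.of_apply, star_sum, StarMul.star_mul,
        star_star, Pi.star_apply]
      rw [Finset.sum_mul_sum]
      simp only [Finset.mul_sum]
      exact Finset.sum_congr rfl fun p _ => Finset.sum_congr rfl fun q _ => by ring
    rw [h1]
    exact star_mul_self_nonneg _

lemma outer_conj {ι κ : Type*} [Fintype ι] [Fintype κ] [DecidableEq κ]
    (W : Matrix ι κ ℂ) (z : ι → ℂ) :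
    Wᴴ * (outer z) * W = outer (Wᴴ *ᵥ z) := by
  ext p q
  simp only [outer, Matrix.mul_apply, Matrix.of_apply, Matrix.conjTranspose_apply,
    Matrix.mulVec, dotProduct, star_sum, StarMul.star_mul, star_star, Pi.star_apply]
  rw [Finset.sum_mul_sum]
  simp only [Finset.sum_mul, Finset.mul_sum]
  rw [Finset.sum_comm]
  exact Finset.sum_congr rfl fun u _ => Finset.sum_congr rfl fun v _ => by ring

/-- decomposition of a PSD matrix into outer products -/
lemma posSemidef_eq_sum_outer {ι : Type*} [Fintype ι] [DecidableEq ι] {X : Matrix ι ι ℂ}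
    (hX : X.PosSemidef) : ∃ z : ι → ι → ℂ, X = ∑ c, outer (z c) := by
  open scoped MatrixOrder in obtain ⟨B, rfl⟩ := CStarAlgebra.nonneg_iff_eq_star_mul_self.mp hX.nonneg
  refine ⟨fun c p => star (B c p), ?_⟩
  ext p q
  simp [Matrix.star_eq_conjTranspose, Matrix.mul_apply, Matrix.sum_apply, outer, Matrix.conjTranspose_apply, mul_comm]

lemma key_identity' {a b l : ℕ} (Φ : MatC a →ₗ[ℂ] MatC b)
    (z : Fin a × Fin l → ℂ) (y : Fin b × Fin l → ℂ) :
    star y ⬝ᵥ (tensId Φ l (outer z)) *ᵥ y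
      = star (gVec z y) ⬝ᵥ (choi Φ) *ᵥ (gVec z y) :=
  key_identity Φ z y

lemma pad_embed_mul {r k : ℕ} (hr : r ≤ k) :
    (Matrix.of fun (a : Fin r) (c : Fin k) => if (c : ℕ) = (a : ℕ) then (1:ℂ) else 0) *
      (Matrix.of fun (c : Fin k) (b : Fin r) => if (c : ℕ) = (b : ℕ) then (1:ℂ) else 0)
    = (1 : Matrix (Fin r) (Fin r) ℂ) := by
  ext a b
  rw [Matrix.mul_apply]
  rw [Finset.sum_eq_single (Fin.castLE hr a)]
  · by_cases hab : a = b <;>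
      simp [hab, Fin.val_eq_val, Matrix.one_apply, Fin.castLE]
  · intro c _ hc
    have : (c : ℕ) ≠ (a : ℕ) := fun hca => hc (Fin.ext (by simpa [Fin.castLE] using hca))
    simp [this]
  · intro h
    exact absurd (Finset.mem_univ _) h

lemma rank_le_factor {n' m' k : ℕ} {V : Matrix (Fin n') (Fin m') ℂ} (h : V.rank ≤ k) :
    ∃ (C : Matrix (Fin n') (Fin k) ℂ) (D : Matrix (Fin k) (Fin m') ℂ), V = C * D := by
  classical
  obtain ⟨C₀, D₀, hV⟩ :
      ∃ (C₀ : Matrix (Fin n') (Fin V.rank) ℂ) (D₀ : Matrix (Fin V.rank) (Fin m') ℂ),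
        V = C₀ * D₀ := by
    set R := LinearMap.range V.mulVecLin with hR
    let bR : Module.Basis (Fin (Module.finrank ℂ R)) ℂ R := Module.finBasis ℂ R
    have hrank : V.rank = Module.finrank ℂ R := rfl
    rw [hrank]
    refine ⟨Matrix.of fun i c => ((bR c : R) : Fin n' → ℂ) i,
      Matrix.of fun c j => bR.repr ⟨V *ᵥ Pi.single j 1, ⟨Pi.single j 1, rfl⟩⟩ c, ?_⟩
    ext i j
    rw [Matrix.mul_apply]
    have hx : (⟨V *ᵥ Pi.single j 1, ⟨Pi.single j 1, rfl⟩⟩ : R) =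
        ∑ c : Fin (Module.finrank ℂ R),
          bR.repr ⟨V *ᵥ Pi.single j 1, ⟨Pi.single j 1, rfl⟩⟩ c • bR c :=
      (bR.sum_repr _).symm
    have h2 := congrArg (fun v : R => (v : Fin n' → ℂ) i) hx
    simp only [Submodule.coe_sum, SetLike.val_smul, Finset.sum_apply, Pi.smul_apply,
      smul_eq_mul] at h2
    have h4 : V i j = (V *ᵥ Pi.single j 1) i := by
      simp [Matrix.mulVec_single]
    simp only [Matrix.of_apply]
    rw [h4]
    exact h2.trans (Finset.sum_congr rfl fun c _ => by ring)
  refine ⟨C₀ * Matrix.of fun (a : Fin V.rank) (c : Fin k) => if (c : ℕ) = (a : ℕ) then (1:ℂ) else 0,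
    (Matrix.of fun (c : Fin k) (b : Fin V.rank) => if (c : ℕ) = (b : ℕ) then (1:ℂ) else 0) * D₀, ?_⟩
  rw [Matrix.mul_assoc, ← Matrix.mul_assoc _ _ D₀, pad_embed_mul h, Matrix.one_mul]
  exact hV

lemma tensId_sum {a b l : ℕ} (Φ : MatC a →ₗ[ℂ] MatC b) {ι : Type*} (s : Finset ι)
    (f : ι → Matrix (Fin a × Fin l) (Fin a × Fin l) ℂ) :
    tensId Φ l (∑ c ∈ s, f c) = ∑ c ∈ s, tensId Φ l (f c) := by
  ext p q
  simp only [tensId, Matrix.of_apply, Matrix.sum_apply]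
  rw [show (Matrix.of fun i j => ∑ c ∈ s, f c (i, p.2) (j, q.2))
      = ∑ c ∈ s, Matrix.of fun i j => f c (i, p.2) (j, q.2) by
    ext i j; simp [Matrix.sum_apply]]
  rw [map_sum]
  simp [Matrix.sum_apply]

lemma tensId_isHermitian {a b l : ℕ} {Φ : MatC a →ₗ[ℂ] MatC b} (hΦ : HermPreserving Φ)
    {X : Matrix (Fin a × Fin l) (Fin a × Fin l) ℂ} (hX : X.IsHermitian) :
    (tensId Φ l X).IsHermitian := by
  ext p q
  simp only [Matrix.conjTranspose_apply, tensId, Matrix.of_apply]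
  have h1 : (Matrix.of fun i j => X (i, q.2) (j, p.2))
      = (Matrix.of fun i j => X (i, p.2) (j, q.2))ᴴ := by
    ext i j
    simp only [Matrix.of_apply, Matrix.conjTranspose_apply]
    rw [← hX.apply]
  rw [h1, hΦ, Matrix.conjTranspose_apply, star_star]

lemma hermPreserving_comp_left {a b c : ℕ} {Φ : MatC a →ₗ[ℂ] MatC b} (hΦ : HermPreserving Φ)
    (W : Matrix (Fin c) (Fin b) ℂ) : HermPreserving ((adMap W) ∘ₗ Φ) := by
  intro X
  simp only [LinearMap.comp_apply, adMap, LinearMap.coe_mk, AddHom.coe_mk]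
  rw [hΦ]
  simp [Matrix.conjTranspose_mul, Matrix.mul_assoc]

lemma hermPreserving_comp_right {a b c : ℕ} {Φ : MatC a →ₗ[ℂ] MatC b} (hΦ : HermPreserving Φ)
    (W : Matrix (Fin a) (Fin c) ℂ)  : HermPreserving (Φ ∘ₗ (adMap W)) := by
  intro X
  simp only [LinearMap.comp_apply, adMap, LinearMap.coe_mk, AddHom.coe_mk]
  rw [show W * Xᴴ * Wᴴ = (W * X * Wᴴ)ᴴ by simp [Matrix.conjTranspose_mul, Matrix.mul_assoc]]
  exact hΦ _

lemma conj_quadratic {ι κ : Type*} [Fintype ι] [Fintype κ]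
    (W : Matrix ι κ ℂ) (T : Matrix ι ι ℂ) (y : κ → ℂ) :
    star y ⬝ᵥ (Wᴴ * T * W) *ᵥ y = star (W *ᵥ y) ⬝ᵥ T *ᵥ (W *ᵥ y) := by
  rw [← Matrix.mulVec_mulVec, ← Matrix.mulVec_mulVec, Matrix.dotProduct_mulVec,
    ← Matrix.star_mulVec]

lemma tensId_adComp_left {a b l : ℕ} (Φ : MatC a →ₗ[ℂ] MatC b) (V : Matrix (Fin b) (Fin a) ℂ)
    (X : Matrix (Fin a × Fin l) (Fin a × Fin l) ℂ) :
    tensId (adMap Vᴴ ∘ₗ Φ) l X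
      = (V ⊗ₖ (1 : Matrix (Fin l) (Fin l) ℂ))ᴴ * tensId Φ l X * (V ⊗ₖ (1 : Matrix (Fin l) (Fin l) ℂ)) := by
  ext p q
  simp only [tensId, Matrix.of_apply, LinearMap.comp_apply, adMap, LinearMap.coe_mk,
    AddHom.coe_mk, Matrix.mul_apply, Matrix.conjTranspose_apply, Matrix.kroneckerMap_apply,
    Matrix.one_apply, Fintype.sum_prod_type, mul_ite, ite_mul, mul_zero, zero_mul, mul_one,
    one_mul, apply_ite (star : ℂ → ℂ), star_zero, star_one, Finset.sum_ite_eq, Finset.sum_ite_eq',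
    Finset.mem_univ, if_true, Finset.sum_ite_irrel, Finset.sum_const_zero]
  simp [star_star]

lemma tensId_adComp_right {a b l : ℕ} (Φ : MatC a →ₗ[ℂ] MatC b) (V : Matrix (Fin b) (Fin a) ℂ)
    (X : Matrix (Fin b × Fin l) (Fin b × Fin l) ℂ) :
    tensId (Φ ∘ₗ adMap Vᴴ) l X
      = tensId Φ l ((V ⊗ₖ (1 : Matrix (Fin l) (Fin l) ℂ))ᴴ * X * (V ⊗ₖ (1 : Matrix (Fin l) (Fin l) ℂ))) := by
  set W : Matrix (Fin b × Fin l) (Fin a × Fin l) ℂ := V ⊗ₖ (1 : Matrix (Fin l) (Fin l) ℂ) with hW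
  ext p q
  simp only [tensId, Matrix.of_apply, LinearMap.comp_apply, adMap, LinearMap.coe_mk,
    AddHom.coe_mk, Matrix.conjTranspose_conjTranspose]
  have hM : (Vᴴ * (Matrix.of fun i j => X (i, p.2) (j, q.2)) * V)
      = Matrix.of fun (c : Fin a) (d : Fin a) => (Wᴴ * X * W) (c, p.2) (d, q.2) := by
    ext c d
    simp only [hW, Matrix.mul_apply, Matrix.of_apply, Matrix.conjTranspose_apply,
      Matrix.kroneckerMap_apply, Matrix.one_apply, Fintype.sum_prod_type, mul_ite, ite_mul,
      mul_zero, zero_mul, mul_one, one_mul, apply_ite (star : ℂ → ℂ), star_zero, star_one,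
      Finset.sum_ite_eq, Finset.sum_ite_eq', Finset.mem_univ, if_true, Finset.sum_ite_irrel,
      Finset.sum_const_zero, star_star]
  rw [hM]

lemma dot_sum_mulVec {ι κ : Type*} [Fintype ι] (s : Finset κ)
    (T : κ → Matrix ι ι ℂ) (u v : ι → ℂ) :
    u ⬝ᵥ (∑ c ∈ s, T c) *ᵥ v = ∑ c ∈ s, u ⬝ᵥ (T c) *ᵥ v := by
  simp only [dotProduct, Matrix.mulVec, Matrix.sum_apply, Finset.sum_mul, Finset.mul_sum]
  calc ∑ x : ι, ∑ y : ι, ∑ c ∈ s, u x * (T c x y * v y)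
      = ∑ x : ι, ∑ c ∈ s, ∑ y : ι, u x * (T c x y * v y) :=
        Finset.sum_congr rfl fun x _ => Finset.sum_comm
    _ = ∑ c ∈ s, ∑ x : ι, ∑ y : ι, u x * (T c x y * v y) := Finset.sum_comm

/-- quadratic-form positivity of the Choi matrix on factored (Schmidt rank ≤ k) vectors -/
def QF {m n : ℕ} (Φ : MatC m →ₗ[ℂ] MatC n) (k : ℕ) : Prop :=
  ∀ (A : Matrix (Fin m) (Fin k) ℂ) (B : Matrix (Fin k) (Fin n) ℂ),
    0 ≤ star (fun p : Fin m × Fin n => (A * B) p.1 p.2) ⬝ᵥ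
        (choi Φ) *ᵥ (fun p : Fin m × Fin n => (A * B) p.1 p.2)

lemma QF.le {m n k : ℕ} {Φ : MatC m →ₗ[ℂ] MatC n} (hq : QF Φ k) (g : Fin m × Fin n → ℂ)
    (A : Matrix (Fin m) (Fin k) ℂ) (B : Matrix (Fin k) (Fin n) ℂ)
    (hg : g = fun p => (A * B) p.1 p.2) : 0 ≤ star g ⬝ᵥ (choi Φ) *ᵥ g := by
  rw [hg]; exact hq A B

lemma isKPositive_iff_qf {m n k : ℕ} {Φ : MatC m →ₗ[ℂ] MatC n} (hΦ : HermPreserving Φ) :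
    IsKPositive Φ k ↔ QF Φ k := by
  constructor
  · intro hK A B
    set z : Fin m × Fin k → ℂ := fun p => star (A p.1 p.2) with hzd
    set y : Fin n × Fin k → ℂ := fun p => B p.2 p.1 with hyd
    have h := (hK (outer z) (outer_posSemidef z)).dotProduct_mulVec_nonneg y
    rw [key_identity'] at h
    have hg : gVec z y = fun p : Fin m × Fin n => (A * B) p.1 p.2 := by
      funext p
      simp [gVec, Matrix.mul_apply, hzd, hyd, star_star]
    rwa [hg] at h
  · intro hq X hX
    refine Matrix.PosSemidef.of_dotProduct_mulVec_nonneg (tensId_isHermitian hΦ hX.1) fun y => ?_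
    obtain ⟨z, hz⟩ := posSemidef_eq_sum_outer hX
    rw [hz, tensId_sum, dot_sum_mulVec]
    refine Finset.sum_nonneg fun c _ => ?_
    rw [key_identity']
    refine hq.le _ (Matrix.of fun r u => star (z c (r, u))) (Matrix.of fun u i => y (i, u)) ?_
    funext p
    simp [gVec, Matrix.mul_apply]

lemma cond1_iff_qf {m n k : ℕ} {Φ : MatC m →ₗ[ℂ] MatC n} (hΦ : HermPreserving Φ) :
    (∀ V : Matrix (Fin n) (Fin m) ℂ, V.rank ≤ k →
        IsCompletelyPositive (adMap Vᴴ ∘ₗ Φ)) ↔ QF Φ k := by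
  constructor
  · intro hc A B
    set V : Matrix (Fin n) (Fin m) ℂ := (A * B)ᵀ with hVd
    have hV : V.rank ≤ k := by
      rw [hVd, Matrix.transpose_mul]
      exact le_trans (Matrix.rank_mul_le_right _ _)
        (by simpa using Matrix.rank_le_card_height Aᵀ)
    set e : Fin m × Fin m → ℂ := fun p => if p.1 = p.2 then 1 else 0 with hed
    have h := (hc V hV m (outer e) (outer_posSemidef e)).dotProduct_mulVec_nonneg e
    rw [tensId_adComp_left, conj_quadratic, key_identity'] at h
    have hg : gVec e ((V ⊗ₖ (1 : Matrix (Fin m) (Fin m) ℂ)) *ᵥ e)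
        = fun p : Fin m × Fin n => (A * B) p.1 p.2 := by
      funext p
      simp [gVec, Matrix.mulVec, dotProduct, Matrix.kroneckerMap_apply, Matrix.one_apply,
        Fintype.sum_prod_type, hed, apply_ite (star : ℂ → ℂ), mul_ite, ite_mul, mul_zero,
        zero_mul, mul_one, one_mul, star_one, star_zero, Finset.sum_ite_eq,
        Finset.sum_ite_eq', hVd]
      simp [Matrix.mul_apply, mul_comm]
    rwa [hg] at h
  · intro hq V hV l X hX
    obtain ⟨C, D, hVCD⟩ := rank_le_factor hV
    refine Matrix.PosSemidef.of_dotProduct_mulVec_nonneg (tensId_isHermitian (hermPreserving_comp_left hΦ Vᴴ) hX.1) fun y => ?_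
    rw [tensId_adComp_left, conj_quadratic]
    set w : Fin n × Fin l → ℂ := (V ⊗ₖ (1 : Matrix (Fin l) (Fin l) ℂ)) *ᵥ y with hwd
    have hw : ∀ i t, w (i, t) = ∑ a, V i a * y (a, t) := by
      intro i t
      simp [hwd, Matrix.mulVec, dotProduct, Matrix.kroneckerMap_apply, Matrix.one_apply,
        Fintype.sum_prod_type, mul_ite, ite_mul, mul_zero, zero_mul, mul_one,
        Finset.sum_ite_eq, Finset.sum_ite_eq']
    obtain ⟨z, hz⟩ := posSemidef_eq_sum_outer hX
    rw [hz, tensId_sum, dot_sum_mulVec]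
    refine Finset.sum_nonneg fun c _ => ?_
    rw [key_identity']
    refine hq.le _
      (Matrix.of fun r u => ∑ t, ∑ a, star (z c (r, t)) * (D u a * y (a, t)))
      (Matrix.of fun u i => C i u) ?_
    funext p
    have h1 : gVec (z c) w p = ∑ t, star (z c (p.1, t)) * ∑ a, V p.2 a * y (a, t) := by
      simp only [gVec]
      exact Finset.sum_congr rfl fun t _ => by rw [hw]
    rw [h1]
    simp only [Matrix.mul_apply, Matrix.of_apply, hVCD]
    simp only [Matrix.mul_apply, Finset.sum_mul, Finset.mul_sum, ← Finset.sum_product',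
      Finset.univ_product_univ]
    exact Fintype.sum_equiv
      ⟨fun x => (x.2.2, (x.1, x.2.1)), fun x => (x.2.1, (x.2.2, x.1)),
       fun x => rfl, fun x => rfl⟩ _ _ (fun x => by simp only [Equiv.coe_fn_mk]; ring)

lemma cond2_iff_qf {m n k : ℕ} {Φ : MatC m →ₗ[ℂ] MatC n} (hΦ : HermPreserving Φ) :
    (∀ V : Matrix (Fin n) (Fin m) ℂ, V.rank ≤ k →
        IsCompletelyPositive (Φ ∘ₗ adMap Vᴴ)) ↔ QF Φ k := by
  constructor
  · intro hc A B
    set V : Matrix (Fin n) (Fin m) ℂ := (A * B)ᵀ with hVd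
    have hV : V.rank ≤ k := by
      rw [hVd, Matrix.transpose_mul]
      exact le_trans (Matrix.rank_mul_le_right _ _)
        (by simpa using Matrix.rank_le_card_height Aᵀ)
    set e : Fin n × Fin n → ℂ := fun p => if p.1 = p.2 then 1 else 0 with hed
    have h := (hc V hV n (outer e) (outer_posSemidef e)).dotProduct_mulVec_nonneg e
    rw [tensId_adComp_right, outer_conj, key_identity'] at h
    have hg : gVec ((V ⊗ₖ (1 : Matrix (Fin n) (Fin n) ℂ))ᴴ *ᵥ e) e
        = fun p : Fin m × Fin n => (A * B) p.1 p.2 := by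
      funext p
      simp [gVec, Matrix.mulVec, dotProduct, Matrix.kroneckerMap_apply, Matrix.one_apply,
        Matrix.conjTranspose_apply, Fintype.sum_prod_type, hed, apply_ite (star : ℂ → ℂ),
        mul_ite, ite_mul, mul_zero, zero_mul, mul_one, one_mul, star_one, star_zero,
        star_star, Finset.sum_ite_eq, Finset.sum_ite_eq', hVd]
      simp [Matrix.mul_apply, mul_comm]
    rwa [hg] at h
  · intro hq V hV l X hX
    obtain ⟨C, D, hVCD⟩ := rank_le_factor hV
    refine Matrix.PosSemidef.of_dotProduct_mulVec_nonneg (tensId_isHermitian (hermPreserving_comp_right hΦ Vᴴ) hX.1) fun y => ?_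
    rw [tensId_adComp_right]
    set W : Matrix (Fin n × Fin l) (Fin m × Fin l) ℂ
      := V ⊗ₖ (1 : Matrix (Fin l) (Fin l) ℂ) with hWd
    obtain ⟨z, hz⟩ := posSemidef_eq_sum_outer hX
    have hX' : Wᴴ * X * W = ∑ c, outer (Wᴴ *ᵥ z c) := by
      rw [hz, Finset.sum_congr rfl (fun c (_ : c ∈ Finset.univ) => (outer_conj W (z c)).symm),
        ← Matrix.sum_mul, ← Matrix.mul_sum]
    rw [hX', tensId_sum, dot_sum_mulVec]
    refine Finset.sum_nonneg fun c _ => ?_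
    rw [key_identity']
    have hzc : ∀ p t, (Wᴴ *ᵥ z c) (p, t) = ∑ a, star (V a p) * z c (a, t) := by
      intro p t
      simp [hWd, Matrix.mulVec, dotProduct, Matrix.kroneckerMap_apply, Matrix.one_apply,
        Matrix.conjTranspose_apply, Fintype.sum_prod_type, mul_ite, ite_mul, mul_zero,
        zero_mul, mul_one, apply_ite (star : ℂ → ℂ), star_zero, star_one, star_star,
        Finset.sum_ite_eq, Finset.sum_ite_eq']
    refine hq.le _
      (Matrix.of fun p u => D u p)
      (Matrix.of fun u i => ∑ t, ∑ a, C a u * star (z c (a, t)) * y (i, t)) ?_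
    funext p
    have h1 : gVec (Wᴴ *ᵥ z c) y p
        = ∑ t, (∑ a, V a p.1 * star (z c (a, t))) * y (p.2, t) := by
      simp only [gVec]
      refine Finset.sum_congr rfl fun t _ => ?_
      rw [hzc]
      simp [star_sum]
    rw [h1]
    simp only [Matrix.mul_apply, Matrix.of_apply, hVCD]
    simp only [Matrix.mul_apply, Finset.sum_mul, Finset.mul_sum, ← Finset.sum_product',
      Finset.univ_product_univ]
    exact Fintype.sum_equiv
      ⟨fun x => (x.2.2, (x.1, x.2.1)), fun x => (x.2.1, (x.2.2, x.1)),
       fun x => rfl, fun x => rfl⟩ _ _ (fun x => by simp only [Equiv.coe_fn_mk]; ring)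

/-- `Φ` is `k`-positive iff `Ad_{V*}∘Φ` is CP for all `V` with `rk V ≤ k`,
iff `Φ∘Ad_{V*}` is CP for all such `V`. -/
theorem stmt13 {m n k : ℕ} (Φ : MatC m →ₗ[ℂ] MatC n) (hΦ : HermPreserving Φ) :
    (IsKPositive Φ k ↔
      ∀ V : Matrix (Fin n) (Fin m) ℂ, V.rank ≤ k →
        IsCompletelyPositive (adMap Vᴴ ∘ₗ Φ)) ∧
    (IsKPositive Φ k ↔
      ∀ V : Matrix (Fin n) (Fin m) ℂ, V.rank ≤ k →
        IsCompletelyPositive (Φ ∘ₗ adMap Vᴴ)) := by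
  exact ⟨(isKPositive_iff_qf hΦ).trans (cond1_iff_qf hΦ).symm,
    (isKPositive_iff_qf hΦ).trans (cond2_iff_qf hΦ).symm⟩
end
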